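/- Fix holomorphic functions a,b,c,d : Δ → ℂ with a(0) = a'(0) = b(0) = c(0) = 0, d(0) ≠ 0, and a(z)d(z) − b(z)c(z) = z² for all z ∈ Δ (the normal form with n = 1); assume det F'(z) = 0 for all z ∈ Δ*, where F(z) = z⁻¹·(a(z), b(z); c(z), d(z)), equivalently a'd' − b'c' ≡ 1 on Δ. Then b'(0)·c'(0) = −1, and if a is not identically zero then ord₀(a) ≥ ord₀(b − b'(0)·z). -/

import Mathlib

/-!
STATEMENT 18: In the normal form with `n = 1` for a null `F`: `b'(0)·c'(0) = −1`,
and if `a` is not identically zero then `ord₀(a) ≥ ord₀(b − b'(0)·z)`.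
-/

attribute [local instance] Matrix.normedAddCommGroup Matrix.normedSpace

open Metric Matrix

/-- The open unit disc in `ℂ`. -/
noncomputable def Disc : Set ℂ := Metric.ball (0 : ℂ) 1

/-- The punctured open unit disc in `ℂ`. -/
noncomputable def PDisc : Set ℂ := Metric.ball (0 : ℂ) 1 \ {0}

private lemma eqAtPt {f g : ℂ → ℂ} {x : ℂ} (hf : ContinuousAt f x) (hg : ContinuousAt g x)
    (h : ∀ᶠ z in nhdsWithin x {x}ᶜ, f z = g z) : f x = g x :=
  tendsto_nhds_unique ((hf.tendsto.mono_left nhdsWithin_le_nhds).congr' h)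
    (hg.tendsto.mono_left nhdsWithin_le_nhds)

private lemma extendPt {f g : ℂ → ℂ} {x : ℂ} (h : ∀ᶠ z in nhdsWithin x {x}ᶜ, f z = g z)
    (h0 : f x = g x) : ∀ᶠ z in nhds x, f z = g z := by
  rw [eventually_nhdsWithin_iff] at h
  filter_upwards [h] with z hz
  by_cases hzx : z = x
  · subst hzx; exact h0
  · exact hz (by simpa using hzx)

private lemma analyticDeriv {f : ℂ → ℂ} {x : ℂ} (h : AnalyticAt ℂ f x) :
    AnalyticAt ℂ (deriv f) x := by
  obtain ⟨s, hs, h2⟩ := h.eventually_analyticAt.exists_mem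
  exact (AnalyticOnNhd.deriv (fun y hy => h2 y hy)) x (mem_of_mem_nhds hs)

private lemma deriv_fac {f G : ℂ → ℂ} {e : ℕ} (hG : AnalyticAt ℂ G 0)
    (h : ∀ᶠ z in nhds (0:ℂ), f z = z ^ e * G z) :
    ∀ᶠ z in nhds (0:ℂ), deriv f z = (e : ℂ) * z ^ (e - 1) * G z + z ^ e * deriv G z := by
  have h1 : deriv f =ᶠ[nhds (0:ℂ)] deriv (fun w => w ^ e * G w) := Filter.EventuallyEq.deriv h
  filter_upwards [h1, hG.eventually_analyticAt] with z h1z h2z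
  rw [h1z, ((hasDerivAt_pow e z).fun_mul h2z.differentiableAt.hasDerivAt).deriv]

theorem normal_form_n_eq_one_identities
    (a b c d : ℂ → ℂ)
    (ha : DifferentiableOn ℂ a Disc) (hb : DifferentiableOn ℂ b Disc)
    (hc : DifferentiableOn ℂ c Disc) (hd : DifferentiableOn ℂ d Disc)
    (ha0 : a 0 = 0) (ha'0 : deriv a 0 = 0) (hb0 : b 0 = 0) (hc0 : c 0 = 0)
    (hd0 : d 0 ≠ 0)
    (hdet : ∀ z ∈ Disc, a z * d z - b z * c z = z ^ 2)
    (F : ℂ → Matrix (Fin 2) (Fin 2) ℂ)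
    (hF : ∀ z, F z = z⁻¹ • !![a z, b z; c z, d z])
    (hnull : ∀ z ∈ PDisc, (deriv F z).det = 0) :
    deriv b 0 * deriv c 0 = -1 ∧
    ∀ (haA : AnalyticAt ℂ a 0) (hbA : AnalyticAt ℂ (fun z => b z - deriv b 0 * z) 0),
      analyticOrderAt a 0 ≠ ⊤ → analyticOrderAt (fun z => b z - deriv b 0 * z) 0 ≤ analyticOrderAt a 0 := by
  have hOpen : IsOpen Disc := isOpen_ball
  -- Step 1: the identity a'd' - b'c' = 1 on the punctured disc
  have key1 : ∀ z ∈ PDisc, deriv a z * deriv d z - deriv b z * deriv c z = 1 := by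
    intro z hz
    obtain ⟨hzD, hz0'⟩ := hz
    have hz0 : z ≠ 0 := by simpa using hz0'
    have hzD' : (Disc : Set ℂ) ∈ nhds z := hOpen.mem_nhds hzD
    have haz : DifferentiableAt ℂ a z := ha.differentiableAt hzD'
    have hbz : DifferentiableAt ℂ b z := hb.differentiableAt hzD'
    have hcz : DifferentiableAt ℂ c z := hc.differentiableAt hzD'
    have hdz : DifferentiableAt ℂ d z := hd.differentiableAt hzD'
    have hFs : F = fun w => (Matrix.of ![![w⁻¹ * a w, w⁻¹ * b w], ![w⁻¹ * c w, w⁻¹ * d w]]) := by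
      funext w
      rw [hF]
      ext i j
      fin_cases i <;> fin_cases j <;> simp [Matrix.smul_apply]
    have hder : HasDerivAt F
        (Matrix.of ![![-(z^2)⁻¹ * a z + z⁻¹ * deriv a z, -(z^2)⁻¹ * b z + z⁻¹ * deriv b z],
          ![-(z^2)⁻¹ * c z + z⁻¹ * deriv c z, -(z^2)⁻¹ * d z + z⁻¹ * deriv d z]]) z := by
      rw [hFs]
      refine hasDerivAt_pi.mpr fun i => hasDerivAt_pi.mpr fun j => ?_
      fin_cases i <;> fin_cases j <;>
        simpa using (hasDerivAt_inv hz0).fun_mul (DifferentiableAt.hasDerivAt ‹_›)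
    have hdet0 := hnull z ⟨hzD, hz0'⟩
    rw [show deriv F z = _ from hder.deriv, Matrix.det_fin_two_of] at hdet0
    have hE2 : a z * deriv d z + deriv a z * d z - (b z * deriv c z + deriv b z * c z)
        = 2 * z := by
      have h1 : (fun w => a w * d w - b w * c w) =ᶠ[nhds z] (fun w => w ^ 2) := by
        filter_upwards [hzD'] with w hw using hdet w hw
      have h2 := h1.deriv_eq
      rw [((haz.hasDerivAt.fun_mul hdz.hasDerivAt).fun_sub
        (hbz.hasDerivAt.fun_mul hcz.hasDerivAt)).deriv] at h2
      rw [(hasDerivAt_pow 2 z).deriv] at h2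
      push_cast at h2
      linear_combination h2
    have h4 := hdet0
    field_simp at h4
    have h5 : z^4 * (deriv a z * deriv d z - deriv b z * deriv c z - 1) = 0 := by
      linear_combination z^2 * h4 - z^2 * hdet z hzD + z^3 * hE2
    rcases mul_eq_zero.mp h5 with h6 | h6
    · exact absurd h6 (pow_ne_zero 4 hz0)
    · linear_combination h6
  -- basic neighbourhood facts
  have h0D : (0:ℂ) ∈ Disc := mem_ball_self one_pos
  have hball : (Disc : Set ℂ) ∈ nhds 0 := hOpen.mem_nhds h0D
  have hevD : ∀ᶠ z in nhds (0:ℂ), z ∈ Disc := by filter_upwards [hball] with z hz using hz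
  have hevD' : ∀ᶠ z in nhdsWithin (0:ℂ) {(0:ℂ)}ᶜ, z ∈ Disc :=
    hevD.filter_mono nhdsWithin_le_nhds
  have hevne : ∀ᶠ z in nhdsWithin (0:ℂ) {(0:ℂ)}ᶜ, z ≠ 0 := by
    filter_upwards [self_mem_nhdsWithin] with z hz using by simpa using hz
  -- analyticity at 0
  have haA0 : AnalyticAt ℂ a 0 := ha.analyticAt hball
  have hbA0 : AnalyticAt ℂ b 0 := hb.analyticAt hball
  have hcA0 : AnalyticAt ℂ c 0 := hc.analyticAt hball
  have hdA0 : AnalyticAt ℂ d 0 := hd.analyticAt hball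
  -- Step 2: b'(0) c'(0) = -1
  have hu1 : deriv a 0 * deriv d 0 - deriv b 0 * deriv c 0 = 1 := by
    have hcont : ContinuousAt (fun z => deriv a z * deriv d z - deriv b z * deriv c z) 0 :=
      (((analyticDeriv haA0).mul (analyticDeriv hdA0)).sub
        ((analyticDeriv hbA0).mul (analyticDeriv hcA0))).continuousAt
    exact eqAtPt hcont continuousAt_const
      (by filter_upwards [hevD', hevne] with z h1 h2 using key1 z ⟨h1, by simpa using h2⟩)
  have hβγ : deriv b 0 * deriv c 0 = -1 := by
    rw [ha'0] at hu1; linear_combination -hu1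
  refine ⟨hβγ, ?_⟩
  -- Step 3: the order inequality
  intro haA hbA hfin
  have hβ : deriv b 0 ≠ 0 := by
    intro h; rw [h] at hβγ; simp at hβγ
  obtain ⟨n, hn⟩ := WithTop.ne_top_iff_exists.mp hfin
  obtain ⟨A, hAa, hA0, hAeq⟩ := haA.analyticOrderAt_eq_natCast.mp hn.symm
  simp only [sub_zero, smul_eq_mul] at hAeq
  -- n ≥ 2
  have ha00 : a 0 = 0 ^ n * A 0 := hAeq.self_of_nhds
  have hn0 : n ≠ 0 := by
    rintro rfl
    rw [ha0] at ha00
    simp at ha00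
    exact hA0 ha00.symm
  have hderiv_a0 : deriv a 0 = n * 0^(n-1) * A 0 + 0^n * deriv A 0 := by
    rw [Filter.EventuallyEq.deriv_eq hAeq]
    exact ((hasDerivAt_pow n (0:ℂ)).fun_mul hAa.differentiableAt.hasDerivAt).deriv
  have hn2 : 2 ≤ n := by
    by_contra hcon
    interval_cases n
    · exact hn0 rfl
    · rw [ha'0] at hderiv_a0
      simp at hderiv_a0
      exact hA0 hderiv_a0.symm
  obtain ⟨j, rfl⟩ : ∃ j, n = j + 2 := ⟨n - 2, by omega⟩
  by_contra hle
  have hlt : analyticOrderAt a 0 < analyticOrderAt (fun z => b z - deriv b 0 * z) 0 := not_le.mp hle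
  -- factor p = b - b'(0) z as z^(j+3) * P
  obtain ⟨P, hPa, hPeq⟩ : ∃ P : ℂ → ℂ, AnalyticAt ℂ P 0 ∧
      ∀ᶠ z in nhds (0:ℂ), b z - deriv b 0 * z = z ^ (j+3) * P z := by
    rcases eq_or_ne (analyticOrderAt (fun z => b z - deriv b 0 * z) 0) ⊤ with htop | hne
    · refine ⟨0, analyticAt_const, ?_⟩
      filter_upwards [analyticOrderAt_eq_top.mp htop] with z hz
      simpa using hz
    · obtain ⟨m, hm⟩ := WithTop.ne_top_iff_exists.mp hne
      have hmn : j + 3 ≤ m := by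
        rw [← hn, ← hm] at hlt
        have : j + 2 < m := ENat.coe_lt_coe.mp hlt
        omega
      obtain ⟨g, hg, hg0, hgeq⟩ := hbA.analyticOrderAt_eq_natCast.mp hm.symm
      refine ⟨fun z => z ^ (m - (j+3)) * g z, (analyticAt_id.pow _).mul hg, ?_⟩
      filter_upwards [hgeq] with z hz
      simp only [sub_zero, smul_eq_mul] at hz
      rw [hz, ← mul_assoc, ← pow_add]
      congr 2
      omega
  -- the function Q with q = c - c'(0) z = z^(j+1) * Q
  obtain ⟨Q, hQa, hQdef⟩ : ∃ Q : ℂ → ℂ, AnalyticAt ℂ Q 0 ∧ ∀ z,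
      Q z = (deriv b 0)⁻¹ * (A z * d z - deriv c 0 * (z^2 * P z)
        - z * (P z * (c z - deriv c 0 * z))) := by
    refine ⟨_, ?_, fun z => rfl⟩
    exact analyticAt_const.mul (((hAa.mul hdA0).sub
      (analyticAt_const.mul ((analyticAt_id.pow 2).mul hPa))).sub
      (analyticAt_id.mul (hPa.mul (hcA0.sub (analyticAt_const.mul analyticAt_id)))))
  have hββ : (deriv b 0)⁻¹ * deriv b 0 = 1 := inv_mul_cancel₀ hβ
  -- identity (I) on the disc
  have evI : ∀ᶠ z in nhds (0:ℂ), a z * d z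
      = z * (deriv b 0 * (c z - deriv c 0 * z) + deriv c 0 * (b z - deriv b 0 * z))
        + (b z - deriv b 0 * z) * (c z - deriv c 0 * z) := by
    filter_upwards [hevD] with z hz
    linear_combination hdet z hz + z^2 * hβγ
  -- q = z^(j+1) Q on punctured neighbourhood
  have evQpunct : ∀ᶠ z in nhdsWithin (0:ℂ) {(0:ℂ)}ᶜ,
      c z - deriv c 0 * z = z ^ (j+1) * Q z := by
    filter_upwards [evI.filter_mono nhdsWithin_le_nhds,
      hAeq.filter_mono nhdsWithin_le_nhds, hPeq.filter_mono nhdsWithin_le_nhds, hevne]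
      with z hI hA hP hz
    have e1 : z * (deriv b 0 * (c z - deriv c 0 * z))
        = z * (z ^ (j+1) * (A z * d z - deriv c 0 * (z^2 * P z)
          - z * (P z * (c z - deriv c 0 * z)))) := by
      linear_combination (-1 : ℂ) * hI + d z * hA
        + (-(deriv c 0) * z - (c z - deriv c 0 * z)) * hP
    have e2 := mul_left_cancel₀ hz e1
    linear_combination (deriv b 0)⁻¹ * e2 - z^(j+1) * hQdef z
      - (c z - deriv c 0 * z) * hββ
  have evQ : ∀ᶠ z in nhds (0:ℂ), c z - deriv c 0 * z = z ^ (j+1) * Q z := by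
    refine extendPt evQpunct ?_
    simp [hc0]
  -- derivative identities
  have evA' : ∀ᶠ z in nhds (0:ℂ),
      deriv a z = ((j:ℂ)+2) * z^(j+1) * A z + z^(j+2) * deriv A z := by
    filter_upwards [deriv_fac hAa hAeq] with z h
    rw [h]
    push_cast
    ring_nf
  have evB' : ∀ᶠ z in nhds (0:ℂ),
      deriv b z - deriv b 0 = ((j:ℂ)+3) * z^(j+2) * P z + z^(j+3) * deriv P z := by
    have hder : ∀ᶠ z in nhds (0:ℂ),
        deriv (fun w => b w - deriv b 0 * w) z = deriv b z - deriv b 0 := by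
      filter_upwards [hevD] with z hz
      exact (((hb.differentiableAt (hOpen.mem_nhds hz)).hasDerivAt).sub
        (((hasDerivAt_id z).const_mul (deriv b 0)).congr_deriv (mul_one _))).deriv
    filter_upwards [deriv_fac hPa hPeq, hder] with z h1 h2
    rw [← h2, h1]
    push_cast
    ring_nf
  have evC' : ∀ᶠ z in nhds (0:ℂ),
      deriv c z - deriv c 0 = ((j:ℂ)+1) * z^j * Q z + z^(j+1) * deriv Q z := by
    have hder : ∀ᶠ z in nhds (0:ℂ),
        deriv (fun w => c w - deriv c 0 * w) z = deriv c z - deriv c 0 := by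
      filter_upwards [hevD] with z hz
      exact (((hc.differentiableAt (hOpen.mem_nhds hz)).hasDerivAt).sub
        (((hasDerivAt_id z).const_mul (deriv c 0)).congr_deriv (mul_one _))).deriv
    filter_upwards [deriv_fac hQa evQ, hder] with z h1 h2
    rw [← h2, h1]
    push_cast
    ring_nf
  -- identity (II) on the punctured neighbourhood
  have ev2 : ∀ᶠ z in nhdsWithin (0:ℂ) {(0:ℂ)}ᶜ,
      deriv a z * deriv d z
        = deriv b 0 * (deriv c z - deriv c 0) + deriv c 0 * (deriv b z - deriv b 0)
          + (deriv b z - deriv b 0) * (deriv c z - deriv c 0) := by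
    filter_upwards [hevD', hevne] with z h1 h2
    linear_combination key1 z ⟨h1, by simpa using h2⟩ + hβγ
  -- the functions L and R
  obtain ⟨L, hLa, hLdef⟩ : ∃ L : ℂ → ℂ, AnalyticAt ℂ L 0 ∧ ∀ z,
      L z = (((j:ℂ)+2) * A z + z * deriv A z) * deriv d z := by
    refine ⟨_, ?_, fun z => rfl⟩
    exact ((analyticAt_const.mul hAa).add
      (analyticAt_id.mul (analyticDeriv hAa))).mul (analyticDeriv hdA0)
  obtain ⟨R, hRa, hRdef⟩ : ∃ R : ℂ → ℂ, AnalyticAt ℂ R 0 ∧ ∀ z,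
      R z = deriv b 0 * (((j:ℂ)+1) * Q z + z * deriv Q z)
        + deriv c 0 * (z^2 * (((j:ℂ)+3) * P z + z * deriv P z))
        + z^(j+2) * ((((j:ℂ)+3) * P z + z * deriv P z)
            * (((j:ℂ)+1) * Q z + z * deriv Q z)) := by
    refine ⟨_, ?_, fun z => rfl⟩
    have hP' : AnalyticAt ℂ (fun z => ((j:ℂ)+3) * P z + z * deriv P z) 0 :=
      (analyticAt_const.mul hPa).add (analyticAt_id.mul (analyticDeriv hPa))
    have hQ' : AnalyticAt ℂ (fun z => ((j:ℂ)+1) * Q z + z * deriv Q z) 0 :=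
      (analyticAt_const.mul hQa).add (analyticAt_id.mul (analyticDeriv hQa))
    exact ((analyticAt_const.mul hQ').add
      (analyticAt_const.mul ((analyticAt_id.pow 2).mul hP'))).add
      ((analyticAt_id.pow (j+2)).mul (hP'.mul hQ'))
  -- final identity z * L = R on punctured neighbourhood
  have hfinal : ∀ᶠ z in nhdsWithin (0:ℂ) {(0:ℂ)}ᶜ, z * L z = R z := by
    filter_upwards [ev2, evA'.filter_mono nhdsWithin_le_nhds,
      evB'.filter_mono nhdsWithin_le_nhds, evC'.filter_mono nhdsWithin_le_nhds, hevne]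
      with z h2 hEa hEb hEc hz
    have E : z^j * (z * L z) = z^j * R z := by
      rw [hLdef, hRdef]
      linear_combination h2 - deriv d z * hEa + deriv c z * hEb
        + (deriv b 0 + (((j:ℂ)+3) * z^(j+2) * P z + z^(j+3) * deriv P z)) * hEc
    exact mul_left_cancel₀ (pow_ne_zero j hz) E
  -- evaluate at 0
  have hval : (fun z => z * L z) 0 = R 0 :=
    eqAtPt ((analyticAt_id.mul hLa).continuousAt) hRa.continuousAt hfinal
  have hQ0 : Q 0 ≠ 0 := by
    rw [hQdef 0]
    simp only [zero_pow, mul_zero, zero_mul, sub_zero, ne_eq]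
    simp
    exact ⟨hβ, fun h => hd0 (by tauto), fun h => hd0 (by tauto)⟩
  rw [hRdef 0] at hval
  simp only [zero_mul, mul_zero, add_zero, zero_add, zero_pow, pow_succ] at hval
  have : deriv b 0 * (((j:ℂ)+1) * Q 0 + 0 * deriv Q 0) = 0 := by
    simpa using hval.symm
  have hj1 : ((j:ℂ)+1) ≠ 0 := Nat.cast_add_one_ne_zero j
  simp only [zero_mul, add_zero] at this
  rcases mul_eq_zero.mp this with h | h
  · exact hβ h
  · rcases mul_eq_zero.mp h with h' | h'
    · exact hj1 h'
    · exact hQ0 h'
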